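/- For the hyperexponential model with λ₁ − λ₀ ≤ μ_n (and λ₁ > λ₀ or otherwise appropriately interpreted), for any π in the simplex with π_n > 0 and π ≠ 1, lim_{t→∞} x_Δ(t,π) = 1. -/

import Mathlib

open Filter

private lemma my_int_exp_mul (c : ℝ) (hc : c ≠ 0) (t : ℝ) :
    ∫ u in (0:ℝ)..t, Real.exp (c * u) = (Real.exp (c * t) - 1) / c := by
  have D : ∀ x : ℝ, HasDerivAt (fun y : ℝ => Real.exp (c * y) / c) (Real.exp (c * x)) x := by
    intro x
    have h := ((Real.hasDerivAt_exp (c * x)).comp x ((hasDerivAt_id x).const_mul c))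
    simpa [mul_comm, mul_div_assoc, mul_div_cancel_left₀ _ hc] using h.div_const c
  rw [intervalIntegral.integral_eq_sub_of_hasDerivAt (fun x _ => D x)
    ((Real.continuous_exp.comp (continuous_const.mul continuous_id)).intervalIntegrable 0 t)]
  simp [sub_div]

private lemma my_tendsto_exp_zero {c : ℝ} (hc : c < 0) :
    Tendsto (fun t : ℝ => Real.exp (c * t)) atTop (nhds 0) := by
  rw [Real.tendsto_exp_comp_nhds_zero]
  exact (tendsto_const_mul_atBot_of_neg hc).2 tendsto_id

/-- Hyperexponential model with `μ_n − (λ₁ − λ₀) ≥ 0`: for any `π` in the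
simplex with `π_n > 0` and `π_Δ ≠ 1`, `x_Δ(t,π) → 1` as `t → ∞`. -/
theorem hyperexponential_limit_subcritical
    {n : ℕ} (μ : Fin (n + 1) → ℝ) (hμanti : StrictAnti μ)
    (hμpos : 0 < μ (Fin.last n))
    (l0 l1 : ℝ) (h0 : 0 < l0) (h1 : 0 < l1)
    (hrate : 0 ≤ μ (Fin.last n) - (l1 - l0))
    (π : Fin (n + 1) → ℝ) (πΔ : ℝ)
    (hπ0 : ∀ i, 0 ≤ π i) (hπΔ0 : 0 ≤ πΔ)
    (hsum : (∑ i, π i) + πΔ = 1)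
    (hπn : 0 < π (Fin.last n)) (hπΔ1 : πΔ ≠ 1)
    (N : ℝ → ℝ)
    (hN : ∀ t, N t = (∑ k, π k * Real.exp (-μ k * t)) +
      Real.exp (-(l1 - l0) * t) *
        (πΔ + ∑ k, π k * ∫ u in (0:ℝ)..t,
          Real.exp ((l1 - l0) * u) * (μ k * Real.exp (-μ k * u))))
    (xΔ : ℝ → ℝ)
    (hxΔ : ∀ t, xΔ t = Real.exp (-(l1 - l0) * t) *
      (πΔ + ∑ k, π k * ∫ u in (0:ℝ)..t,
        Real.exp ((l1 - l0) * u) * (μ k * Real.exp (-μ k * u))) / N t) :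
    Tendsto xΔ atTop (nhds 1) := by
  set Δ := l1 - l0 with hΔ
  -- rewrite the integrand
  have hint : ∀ (k : Fin (n+1)) (t : ℝ),
      (∫ u in (0:ℝ)..t, Real.exp (Δ * u) * (μ k * Real.exp (-μ k * u)))
        = μ k * ∫ u in (0:ℝ)..t, Real.exp ((Δ - μ k) * u) := by
    intro k t
    rw [← intervalIntegral.integral_const_mul]
    refine intervalIntegral.integral_congr fun u _ => ?_
    rw [show (Δ - μ k) * u = Δ * u + -μ k * u by ring, Real.exp_add]
    ring
  set f : ℝ → ℝ := fun t => πΔ + ∑ k, π k * (μ k * ∫ u in (0:ℝ)..t, Real.exp ((Δ - μ k) * u))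
    with hf
  set g : ℝ → ℝ := fun t => ∑ k, π k * Real.exp ((Δ - μ k) * t) with hg
  have hx : ∀ t, xΔ t = f t / (g t + f t) := by
    intro t
    rw [hxΔ, hN]
    simp only [hint]
    have hA : (∑ k, π k * Real.exp (-μ k * t)) =
        Real.exp (-Δ * t) * ∑ k, π k * Real.exp ((Δ - μ k) * t) := by
      rw [Finset.mul_sum]
      refine Finset.sum_congr rfl fun k _ => ?_
      rw [← mul_assoc, mul_comm (Real.exp (-Δ * t)) (π k), mul_assoc, ← Real.exp_add]
      ring_nf
    rw [hA, ← mul_add, mul_div_mul_left _ _ (Real.exp_ne_zero (-Δ * t))]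
  rw [tendsto_congr hx]
  -- nonnegativity of g
  have hgnonneg : ∀ t, 0 ≤ g t :=
    fun t => Finset.sum_nonneg fun k _ => mul_nonneg (hπ0 k) (Real.exp_pos _).le
  have hμk : ∀ k : Fin (n+1), μ (Fin.last n) ≤ μ k :=
    fun k => hμanti.antitone (Fin.le_last k)
  rcases eq_or_lt_of_le hrate with hcrit | hsub
  · -- critical case: Δ = μ (last n)
    have hΔeq : Δ = μ (Fin.last n) := by linarith [hcrit.symm]
    have hclt : ∀ k : Fin n, Δ - μ k.castSucc < 0 := by
      intro k
      have := hμanti (Fin.castSucc_lt_last k)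
      linarith
    -- f tends to atTop
    have hftop : Tendsto f atTop atTop := by
      have hsplit : ∀ t, f t = (πΔ + ∑ k : Fin n, π k.castSucc *
          (μ k.castSucc * ∫ u in (0:ℝ)..t, Real.exp ((Δ - μ k.castSucc) * u)))
          + π (Fin.last n) * μ (Fin.last n) * t := by
        intro t
        rw [hf]
        simp only [Fin.sum_univ_castSucc]
        have h0' : (Δ - μ (Fin.last n)) = 0 := by rw [hΔeq]; ring
        rw [h0']
        simp
        ring
      rw [tendsto_congr hsplit]
      refine Tendsto.add_atTop (C := πΔ + ∑ k : Fin n, π k.castSucc *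
          (μ k.castSucc * ((0 - 1) / (Δ - μ k.castSucc)))) ?_ ?_
      · refine Tendsto.const_add _ ?_
        apply tendsto_finset_sum
        intro k _
        have hck : Δ - μ k.castSucc ≠ 0 := ne_of_lt (hclt k)
        have h2 : Tendsto (fun t => π k.castSucc * (μ k.castSucc *
            ((Real.exp ((Δ - μ k.castSucc) * t) - 1) / (Δ - μ k.castSucc)))) atTop
            (nhds (π k.castSucc * (μ k.castSucc * ((0 - 1) / (Δ - μ k.castSucc))))) :=
          (((my_tendsto_exp_zero (hclt k)).sub_const 1).div_const _).const_mul _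
            |>.const_mul _
        refine h2.congr fun t => ?_
        rw [my_int_exp_mul _ hck]
      · exact (tendsto_const_mul_atTop_of_pos (mul_pos hπn hμpos)).2 tendsto_id
    -- g tends to a finite limit
    have hgto : Tendsto g atTop (nhds (π (Fin.last n))) := by
      have hsplit : ∀ t, g t = (∑ k : Fin n, π k.castSucc *
          Real.exp ((Δ - μ k.castSucc) * t)) + π (Fin.last n) := by
        intro t
        rw [hg]
        simp only [Fin.sum_univ_castSucc]
        have h0' : (Δ - μ (Fin.last n)) = 0 := by rw [hΔeq]; ring
        rw [h0']
        simp
      rw [tendsto_congr hsplit]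
      have h3 : Tendsto (fun t => ∑ k : Fin n, π k.castSucc *
          Real.exp ((Δ - μ k.castSucc) * t)) atTop (nhds (∑ _k : Fin n, (0:ℝ))) := by
        apply tendsto_finset_sum
        intro k _
        simpa using (my_tendsto_exp_zero (hclt k)).const_mul (π k.castSucc)
      simpa using h3.add_const (π (Fin.last n))
    -- conclude
    have hgfto : Tendsto (fun t => g t + f t) atTop atTop := hgto.add_atTop hftop
    have hq : Tendsto (fun t => g t / (g t + f t)) atTop (nhds 0) := hgto.div_atTop hgfto
    have h4 : Tendsto (fun t => 1 - g t / (g t + f t)) atTop (nhds 1) := by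
      simpa using tendsto_const_nhds.sub hq
    refine Tendsto.congr' ?_ h4
    filter_upwards [hgfto.eventually_ge_atTop 1] with t ht
    have hne : g t + f t ≠ 0 := by linarith
    field_simp
    ring
  · -- subcritical case: Δ < μ (last n)
    have hclt : ∀ k : Fin (n+1), Δ - μ k < 0 := by
      intro k
      have := hμk k
      linarith
    set L : ℝ := πΔ + ∑ k, π k * (μ k * ((0 - 1) / (Δ - μ k))) with hL
    have hfto : Tendsto f atTop (nhds L) := by
      rw [hL]
      refine Tendsto.const_add _ ?_
      apply tendsto_finset_sum
      intro k _
      have hck : Δ - μ k ≠ 0 := ne_of_lt (hclt k)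
      have h2 : Tendsto (fun t => π k * (μ k * ((Real.exp ((Δ - μ k) * t) - 1) / (Δ - μ k))))
          atTop (nhds (π k * (μ k * ((0 - 1) / (Δ - μ k))))) :=
        (((my_tendsto_exp_zero (hclt k)).sub_const 1).div_const _).const_mul _ |>.const_mul _
      refine h2.congr fun t => ?_
      rw [my_int_exp_mul _ hck]
    have hgto : Tendsto g atTop (nhds 0) := by
      have h3 : Tendsto g atTop (nhds (∑ _k : Fin (n+1), (0:ℝ))) := by
        apply tendsto_finset_sum
        intro k _
        simpa using (my_tendsto_exp_zero (hclt k)).const_mul (π k)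
      simpa using h3
    have hLpos : 0 < L := by
      rw [hL]
      have hterm : ∀ k : Fin (n+1), 0 ≤ π k * (μ k * ((0 - 1) / (Δ - μ k))) := by
        intro k
        refine mul_nonneg (hπ0 k) (mul_nonneg (le_of_lt (lt_of_lt_of_le hμpos (hμk k))) ?_)
        rw [div_nonneg_iff]
        right
        constructor <;> [linarith; exact le_of_lt (hclt k)]
      have hlast : 0 < π (Fin.last n) * (μ (Fin.last n) * ((0 - 1) / (Δ - μ (Fin.last n)))) := by
        refine mul_pos hπn (mul_pos hμpos ?_)
        rw [div_pos_iff]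
        right
        constructor <;> [linarith; exact hclt (Fin.last n)]
      have := Finset.sum_pos' (fun k _ => hterm k) ⟨Fin.last n, Finset.mem_univ _, hlast⟩
      linarith
    have h5 : Tendsto (fun t => f t / (g t + f t)) atTop (nhds (L / (0 + L))) :=
      hfto.div (hgto.add hfto) (by simpa using ne_of_gt hLpos)
    simpa [div_self (ne_of_gt hLpos)] using h5
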